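/- If f is a homeomorphism of a compact metric space with the shadowing property, then for every ε>0 there is δ>0 with the following property: if x is a non-wandering point, y∈X, n>0 satisfy max{d(x,y), d(f^n(x),f^n(y))} < δ and γ := max{d(f^k(x),f^k(y)) : 0≤k<n} > ε, then there exist N≥1 and a compact set K ⊆ X with f^N(K)=K, sup_{k∈ℤ} diam(f^k(K)) ≤ 2γ, and f^N restricted to K semi-conjugate to the full shift on two symbols; in particular K is uncountable and the topological entropy of f on K is at least log(2)/N. -/

import Mathlib

open Filter Metric Set Topology

variable {X : Type*} [MetricSpace X]

/-- `f^k x` for `k : ℤ`, where `f` is a homeomorphism. -/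
def iterZ (f : X ≃ₜ X) (k : ℤ) (x : X) : X :=
  if 0 ≤ k then (⇑f)^[k.toNat] x else (⇑f.symm)^[(-k).toNat] x

/-- The classical shadowing property. -/
def Shadowing (f : X ≃ₜ X) : Prop :=
  ∀ ε > (0:ℝ), ∃ δ > (0:ℝ), ∀ x : ℤ → X,
    (∀ k : ℤ, dist (f (x k)) (x (k+1)) < δ) →
    ∃ z : X, ∀ k : ℤ, dist (iterZ f k z) (x k) < ε

/-- The L-shadowing property. -/
def LShadowing (f : X ≃ₜ X) : Prop :=
  ∀ ε > (0:ℝ), ∃ δ > (0:ℝ), ∀ x : ℤ → X,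
    (∀ k : ℤ, dist (f (x k)) (x (k+1)) ≤ δ) →
    Tendsto (fun k : ℤ => dist (f (x k)) (x (k+1))) cofinite (nhds 0) →
    ∃ z : X, (∀ k : ℤ, dist (iterZ f k z) (x k) ≤ ε) ∧
      Tendsto (fun k : ℤ => dist (iterZ f k z) (x k)) cofinite (nhds 0)

/-- The stable set of `x`. -/
def stableSet (f : X ≃ₜ X) (x : X) : Set X :=
  {y | Tendsto (fun n : ℕ => dist ((⇑f)^[n] x) ((⇑f)^[n] y)) atTop (nhds 0)}

/-- The unstable set of `x`. -/
def unstableSet (f : X ≃ₜ X) (x : X) : Set X := stableSet f.symm x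

/-- The local stable set of size `ε` of `x`. -/
def localStable (f : X ≃ₜ X) (ε : ℝ) (x : X) : Set X :=
  {y | ∀ n : ℕ, dist ((⇑f)^[n] x) ((⇑f)^[n] y) ≤ ε}

/-- The local unstable set of size `ε` of `x`. -/
def localUnstable (f : X ≃ₜ X) (ε : ℝ) (x : X) : Set X := localStable f.symm ε x

/-- `V^s_ε(x) = W^s(x) ∩ W^s_ε(x)`. -/
def Vs (f : X ≃ₜ X) (ε : ℝ) (x : X) : Set X := stableSet f x ∩ localStable f ε x

/-- `V^u_ε(x) = W^u(x) ∩ W^u_ε(x)`. -/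
def Vu (f : X ≃ₜ X) (ε : ℝ) (x : X) : Set X := unstableSet f x ∩ localUnstable f ε x

/-- The limit shadowing property. -/
def LimitShadowing (f : X ≃ₜ X) : Prop :=
  ∀ x : ℕ → X, Tendsto (fun k : ℕ => dist (f (x k)) (x (k+1))) atTop (nhds 0) →
    ∃ y : X, Tendsto (fun k : ℕ => dist ((⇑f)^[k] y) (x k)) atTop (nhds 0)

/-- The two-sided limit shadowing property. -/
def TwoSidedLimitShadowing (f : X ≃ₜ X) : Prop :=
  ∀ x : ℤ → X, Tendsto (fun k : ℤ => dist (f (x k)) (x (k+1))) cofinite (nhds 0) →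
    ∃ y : X, Tendsto (fun k : ℤ => dist (iterZ f k y) (x k)) cofinite (nhds 0)

/-- A non-wandering point. -/
def NonWandering (f : X ≃ₜ X) (x : X) : Prop :=
  ∀ U : Set X, IsOpen U → x ∈ U → ∃ k : ℕ, 0 < k ∧ ((⇑f)^[k] '' U ∩ U).Nonempty

/-- The non-wandering set. -/
def omegaSet (f : X ≃ₜ X) : Set X := {x | NonWandering f x}

/-- Topologically mixing. -/
def TopMixing (f : X ≃ₜ X) : Prop :=
  ∀ U V : Set X, IsOpen U → IsOpen V → U.Nonempty → V.Nonempty →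
    ∃ n : ℕ, 0 < n ∧ ∀ k ≥ n, ((⇑f)^[k] '' U ∩ V).Nonempty

/-- `f` is expansive on the set `A` (as a subsystem). -/
def ExpansiveOn (f : X ≃ₜ X) (A : Set X) : Prop :=
  ∃ c > (0:ℝ), ∀ x ∈ A, ∀ y ∈ A,
    (∀ k : ℤ, dist (iterZ f k x) (iterZ f k y) ≤ c) → x = y

/-- The dynamical ball `Γ_δ(x)`. -/
def dynBall (f : X ≃ₜ X) (δ : ℝ) (x : X) : Set X :=
  {y | ∀ k : ℤ, dist (iterZ f k x) (iterZ f k y) ≤ δ}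

/-- There is a periodic `ε`-pseudo-orbit containing both `x` and `y`. -/
def ChainRel (f : X ≃ₜ X) (ε : ℝ) (x y : X) : Prop :=
  ∃ (n : ℕ) (z : ℕ → X), 0 < n ∧ z 0 = x ∧ z n = x ∧ (∃ i ≤ n, z i = y) ∧
    ∀ i < n, dist (f (z i)) (z (i+1)) < ε

/-- The chain recurrent class of `x`. -/
def chainClass (f : X ≃ₜ X) (x : X) : Set X := {y | ∀ ε > (0:ℝ), ChainRel f ε x y}

/-- `h` is a semiconjugacy from `g` on `K` to the full shift on two symbols. -/
def SemiConjShift (g : X → X) (K : Set X) (h : X → (ℤ → Bool)) : Prop :=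
  ContinuousOn h K ∧ (∀ s : ℤ → Bool, ∃ p ∈ K, h p = s) ∧
    ∀ p ∈ K, h (g p) = fun i => h p (i + 1)

/-- `f` admits arbitrarily small topological semi-horseshoes inside `C`. -/
def SmallHorseshoes (f : X ≃ₜ X) (C : Set X) : Prop :=
  ∀ ε > (0:ℝ), ∃ N : ℕ, 1 ≤ N ∧ ∃ K : Set X, K ⊆ C ∧ IsCompact K ∧
    (⇑f)^[N] '' K = K ∧ (∀ k : ℤ, Metric.diam (iterZ f k '' K) ≤ ε) ∧
    ∃ h : X → (ℤ → Bool), SemiConjShift ((⇑f)^[N]) K h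

lemma iterZ_natCast (f : X ≃ₜ X) (t : ℕ) (x : X) : iterZ f (t : ℤ) x = (⇑f)^[t] x := by
  simp [iterZ]

lemma iterZ_zero (f : X ≃ₜ X) (x : X) : iterZ f 0 x = x := by simp [iterZ]

lemma iterZ_succ (f : X ≃ₜ X) (k : ℤ) (x : X) : iterZ f (k + 1) x = f (iterZ f k x) := by
  rcases le_or_gt 0 k with hk | hk
  · rw [iterZ, if_pos (by omega), iterZ, if_pos hk]
    have : (k + 1).toNat = k.toNat + 1 := by omega
    rw [this, Function.iterate_succ_apply']
  · rcases eq_or_lt_of_le (by omega : k + 1 ≤ 0) with h0 | h0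
    · rw [h0, iterZ_zero, iterZ, if_neg (by omega)]
      have : (-k).toNat = 1 := by omega
      rw [this]; simp
    · rw [iterZ, if_neg (by omega), iterZ, if_neg (by omega)]
      have : (-k).toNat = (-(k + 1)).toNat + 1 := by omega
      rw [this, Function.iterate_succ_apply']
      simp
lemma iterZ_sub_one (f : X ≃ₜ X) (k : ℤ) (x : X) : iterZ f (k - 1) x = f.symm (iterZ f k x) := by
  have := iterZ_succ f (k - 1) x
  rw [sub_add_cancel] at this
  rw [this]; simp

lemma iterZ_add (f : X ≃ₜ X) (k l : ℤ) (x : X) :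
    iterZ f (k + l) x = iterZ f k (iterZ f l x) := by
  induction k using Int.induction_on with
  | zero => simp [iterZ_zero]
  | succ m ih =>
      have h1 : (m : ℤ) + 1 + l = (m + l) + 1 := by ring
      rw [h1, iterZ_succ, ih, iterZ_succ]
  | pred m ih =>
      have h1 : (-(m : ℤ) - 1) + l = (-m + l) - 1 := by ring
      rw [h1, iterZ_sub_one, ih, iterZ_sub_one]

lemma continuous_iterZ (f : X ≃ₜ X) (k : ℤ) : Continuous (iterZ f k) := by
  unfold iterZ
  split
  · exact f.continuous.iterate _
  · exact f.symm.continuous.iterate _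

lemma uc_iter [CompactSpace X] (f : X ≃ₜ X) (n : ℕ) {η' : ℝ} (hη' : 0 < η') :
    ∃ η > 0, η ≤ η' ∧ ∀ u v : X, dist u v < η → ∀ j ≤ n, dist ((⇑f)^[j] u) ((⇑f)^[j] v) < η' := by
  induction n with
  | zero => exact ⟨η', hη', le_refl _, fun u v h j hj => by
      interval_cases j; simpa using h⟩
  | succ m ih =>
      obtain ⟨η1, hη1, hle1, H1⟩ := ih
      have hf : UniformContinuous ((⇑f)^[m+1]) :=
        CompactSpace.uniformContinuous_of_continuous (f.continuous.iterate _)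
      rw [Metric.uniformContinuous_iff] at hf
      obtain ⟨η2, hη2, H2⟩ := hf η' hη'
      refine ⟨min η1 η2, lt_min hη1 hη2, (min_le_left _ _).trans hle1, fun u v h j hj => ?_⟩
      rcases Nat.lt_succ_iff_lt_or_eq.1 (Nat.lt_succ_of_le hj) with hj' | rfl
      · exact H1 u v (h.trans_le (min_le_left _ _)) j (by omega)
      · exact H2 (h.trans_le (min_le_right _ _))

lemma iterate_mul_fixed (f : X ≃ₜ X) {x : X} {j : ℕ} (hj : (⇑f)^[j] x = x) (q : ℕ) :
    (⇑f)^[j * q] x = x := by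
  induction q with
  | zero => simp
  | succ m ih => rw [Nat.mul_succ, Function.iterate_add_apply, hj, ih]

lemma exists_blocks [CompactSpace X] (f : X ≃ₜ X) {x : X} {n : ℕ} (hn : 0 < n)
    (hx : NonWandering f x) {δ₃ : ℝ} (hδ₃ : 0 < δ₃) :
    ∃ (N : ℕ) (z0 : X), n < N ∧
      (∀ j ≤ n, dist ((⇑f)^[j] z0) ((⇑f)^[j] x) < δ₃) ∧
      dist ((⇑f)^[N] z0) x < δ₃ := by
  by_cases hper : ∃ j, 0 < j ∧ j ≤ n ∧ (⇑f)^[j] x = x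
  · obtain ⟨j, hj0, hjn, hjx⟩ := hper
    refine ⟨j * (n + 1), x, ?_, fun k _ => by simpa using hδ₃, ?_⟩
    · calc n < n + 1 := Nat.lt_succ_self n
        _ ≤ j * (n + 1) := Nat.le_mul_of_pos_left _ hj0
    · rw [iterate_mul_fixed f hjx]; simpa using hδ₃
  · push_neg at hper
    -- r = min distance of f^[j] x to x for 1 ≤ j ≤ n
    have hne : (Finset.Icc 1 n).Nonempty := ⟨1, by simp; omega⟩
    set r : ℝ := (Finset.Icc 1 n).inf' hne (fun j => dist ((⇑f)^[j] x) x) with hr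
    have hrpos : 0 < r := by
      rw [hr]
      apply (Finset.lt_inf'_iff hne).2
      intro j hj
      simp only [Finset.mem_Icc] at hj
      exact dist_pos.2 (hper j (by omega) hj.2)
    have hη' : (0:ℝ) < min δ₃ (r / 2) := lt_min hδ₃ (by linarith)
    obtain ⟨η, hη, hηle, Hη⟩ := uc_iter f n hη'
    obtain ⟨k, hk0, w, hw⟩ := hx (ball x η) isOpen_ball (mem_ball_self hη)
    obtain ⟨⟨p, hp, rfl⟩, hwu⟩ := hw
    have hpx : dist p x < η := mem_ball.1 hp
    have hkn : n < k := by
      by_contra hle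
      push_neg at hle
      have h1 : dist ((⇑f)^[k] x) ((⇑f)^[k] p) < min δ₃ (r/2) := by
        have := Hη p x hpx k hle
        rwa [dist_comm]
      have h2 : dist ((⇑f)^[k] p) x < η := mem_ball.1 hwu
      have h3 : r ≤ dist ((⇑f)^[k] x) x := by
        rw [hr]
        exact Finset.inf'_le _ (by simp [Finset.mem_Icc]; omega)
      have h4 : dist ((⇑f)^[k] x) x ≤ dist ((⇑f)^[k] x) ((⇑f)^[k] p) + dist ((⇑f)^[k] p) x :=
        dist_triangle _ _ _
      have h5 : min δ₃ (r/2) ≤ r/2 := min_le_right _ _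
      have h6 : η ≤ r/2 := hηle.trans h5
      linarith
    refine ⟨k, p, hkn, fun j hj => ?_, ?_⟩
    · exact (Hη p x hpx j hj).trans_le (min_le_left _ _)
    · exact (mem_ball.1 hwu).trans_le (hηle.trans (min_le_left _ _))

/-- creation of topological semi-horseshoes from the shadowing
property. -/
theorem horseshoe_of_shadowing [CompactSpace X] (f : X ≃ₜ X) (hsh : Shadowing f) :
    ∀ ε > (0:ℝ), ∃ δ > (0:ℝ), ∀ (x y : X) (n : ℕ) (γ : ℝ),
      NonWandering f x → 0 < n →
      IsGreatest {d : ℝ | ∃ k < n, d = dist ((⇑f)^[k] x) ((⇑f)^[k] y)} γ →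
      ε < γ → dist x y < δ → dist ((⇑f)^[n] x) ((⇑f)^[n] y) < δ →
      ∃ N : ℕ, 1 ≤ N ∧ ∃ K : Set X, IsCompact K ∧ (⇑f)^[N] '' K = K ∧
        (∀ k : ℤ, Metric.diam (iterZ f k '' K) ≤ 2 * γ) ∧
        (∃ h : X → (ℤ → Bool), SemiConjShift ((⇑f)^[N]) K h) ∧
        ¬ K.Countable ∧
        ((Real.log 2 / N : ℝ) : EReal) ≤ Dynamics.coverEntropy (⇑f) K := by
  intro ε hε
  obtain ⟨δ0, hδ0, Hsh⟩ := hsh (ε/4) (by linarith)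
  refine ⟨δ0/2, by linarith, ?_⟩
  intro x y n γ hx hn hγ hεγ hxy hfxy
  obtain ⟨k0, hk0n, hk0⟩ := hγ.1
  have hub : ∀ k < n, dist ((⇑f)^[k] x) ((⇑f)^[k] y) ≤ γ := fun k hk => hγ.2 ⟨k, hk, rfl⟩
  have hγpos : (0:ℝ) < γ := lt_trans hε hεγ
  set δ₃ : ℝ := min (ε/8) (δ0/2) with hδ₃def
  have hδ₃pos : 0 < δ₃ := lt_min (by linarith) (by linarith)
  have hδ₃ε : δ₃ ≤ ε/8 := min_le_left _ _
  have hδ₃δ : δ₃ ≤ δ0/2 := min_le_right _ _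
  obtain ⟨N, z0, hnN, hc1, hc2⟩ := exists_blocks f hn hx hδ₃pos
  have hN1 : 1 ≤ N := by omega
  have hNZ : (0:ℤ) < (N:ℤ) := by exact_mod_cast (by omega : 0 < N)
  -- the two blocks
  set blk : Bool → ℕ → X := fun c j => if c = true ∧ j < n then (⇑f)^[j] y else (⇑f)^[j] z0
    with hblkdef
  set P : (ℤ → Bool) → ℤ → X := fun s k => blk (s (k / (N:ℤ))) (k % (N:ℤ)).toNat with hPdef
  have Pval : ∀ (s : ℤ → Bool) (i : ℤ) (j : ℕ), j < N → P s (i * N + j) = blk (s i) j := by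
    intro s i j hj
    have hd : (i * (N:ℤ) + j) / N = i := by
      rw [add_comm, Int.add_mul_ediv_right _ _ (ne_of_gt hNZ),
        Int.ediv_eq_zero_of_lt (Int.natCast_nonneg j) (by exact_mod_cast hj), zero_add]
    have hm : (i * (N:ℤ) + j) % N = j := by
      rw [add_comm, Int.add_mul_emod_self_right,
        Int.emod_eq_of_lt (Int.natCast_nonneg j) (by exact_mod_cast hj)]
    simp only [hPdef, hd, hm, Int.toNat_natCast]
  have hPshift : ∀ (s : ℤ → Bool) (k : ℤ), P s (k + N) = P (fun i => s (i+1)) k := by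
    intro s k
    have h1 : k + (N:ℤ) = k + 1 * N := by ring
    simp only [hPdef, h1, Int.add_mul_ediv_right _ _ (ne_of_gt hNZ), Int.add_mul_emod_self_right]
  -- wrap bound
  have hwrap : ∀ c : Bool, dist ((⇑f)^[N] z0) (blk c 0) < δ0 := by
    intro c
    have h0 : blk c 0 = if c = true then y else z0 := by
      simp only [hblkdef]
      by_cases hc : c = true <;> simp [hc, hn]
    rw [h0]
    by_cases hc : c = true <;> simp only [hc, if_true, if_false]
    · calc dist ((⇑f)^[N] z0) y ≤ dist ((⇑f)^[N] z0) x + dist x y := dist_triangle _ _ _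
        _ < δ₃ + δ0/2 := by exact add_lt_add hc2 hxy
        _ ≤ δ0 := by linarith
    · have h1 : dist z0 x < δ₃ := by simpa using hc1 0 (by omega)
      calc dist ((⇑f)^[N] z0) z0 ≤ dist ((⇑f)^[N] z0) x + dist x z0 := dist_triangle _ _ _
        _ < δ₃ + δ₃ := add_lt_add hc2 (by rwa [dist_comm] at h1)
        _ ≤ δ0 := by linarith
  -- interior jumps
  have hjump : ∀ (c : Bool) (j : ℕ), j + 1 < N → dist (f (blk c j)) (blk c (j+1)) < δ0 := by
    intro c j hjN
    by_cases hc : c = true ∧ j + 1 < n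
    · have hj' : c = true ∧ j < n := ⟨hc.1, by have := hc.2; omega⟩
      simp only [hblkdef, if_pos hj', if_pos hc, ← Function.iterate_succ_apply' f]
      simpa using hδ0
    · by_cases hc2' : c = true ∧ j < n
      · -- j + 1 = n, transition from y-orbit to z0-orbit
        have hjn : j + 1 = n := by
          have h1 := hc2'.2
          have h2 : ¬ (j + 1 < n) := fun h => hc ⟨hc2'.1, h⟩
          omega
        have e1 : blk c j = (⇑f)^[j] y := by simp only [hblkdef, if_pos hc2']
        have e2 : blk c (j+1) = (⇑f)^[n] z0 := by
          simp only [hblkdef]; rw [if_neg (by omega), hjn]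
        have e3 : f ((⇑f)^[j] y) = (⇑f)^[n] y := by
          rw [← hjn]; exact (Function.iterate_succ_apply' f j y).symm
        rw [e1, e2, e3]
        calc dist ((⇑f)^[n] y) ((⇑f)^[n] z0)
            ≤ dist ((⇑f)^[n] y) ((⇑f)^[n] x) + dist ((⇑f)^[n] x) ((⇑f)^[n] z0) :=
              dist_triangle _ _ _
          _ < δ0/2 + δ₃ := add_lt_add (by rwa [dist_comm]) (by
              have := hc1 n (le_refl n); rwa [dist_comm])
          _ ≤ δ0 := by linarith
      · have hcc : ¬(c = true ∧ j + 1 < n) := hc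
        simp only [hblkdef, if_neg hc2', if_neg hcc, ← Function.iterate_succ_apply' f]
        simpa using hδ0
  -- pseudo-orbit property
  have hpo : ∀ (s : ℤ → Bool) (k : ℤ), dist (f (P s k)) (P s (k + 1)) < δ0 := by
    intro s k
    obtain ⟨i, j, hjN, hk, hPk⟩ : ∃ (i : ℤ) (j : ℕ), j < N ∧ k = i * N + j ∧
        P s k = blk (s i) j := by
      refine ⟨k / N, (k % (N:ℤ)).toNat, ?_, ?_, ?_⟩
      · have h1 := Int.emod_lt_of_pos k hNZ
        have h2 := Int.emod_nonneg k (ne_of_gt hNZ)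
        omega
      · have h2 := Int.emod_nonneg k (ne_of_gt hNZ)
        calc k = (N:ℤ) * (k / N) + k % N := (Int.mul_ediv_add_emod k N).symm
          _ = k / N * N + (((k % (N:ℤ)).toNat : ℤ)) := by
              rw [mul_comm, Int.toNat_of_nonneg h2]
      · simp only [hPdef, Int.toNat_natCast]
    rcases lt_or_ge (j+1) N with hlt | hge
    · have hk1 : k + 1 = i * N + ((j+1 : ℕ) : ℤ) := by rw [hk]; push_cast; ring
      rw [hPk, hk1, Pval s i (j+1) hlt]
      exact hjump (s i) j hlt
    · have hjN' : j + 1 = N := by omega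
      have hN' : ((j:ℤ)) + 1 = (N:ℤ) := by exact_mod_cast hjN'
      have hk1 : k + 1 = (i+1) * N + ((0 : ℕ) : ℤ) := by
        rw [hk]; push_cast; linear_combination hN'
      rw [hPk, hk1, Pval s (i+1) 0 (by omega)]
      have hbv : blk (s i) j = (⇑f)^[j] z0 := by
        simp only [hblkdef, if_neg (by omega : ¬(s i = true ∧ j < n))]
      have e3 : f ((⇑f)^[j] z0) = (⇑f)^[N] z0 := by
        rw [← hjN']; exact (Function.iterate_succ_apply' f j z0).symm
      rw [hbv, e3]
      exact hwrap _
  -- the compact set K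
  set ε4 : ℝ := ε/4 with hε4def
  have hPc : ∀ k : ℤ, Continuous fun s : ℤ → Bool => P s k := by
    intro k
    simp only [hPdef]
    exact Continuous.comp
      (continuous_of_discreteTopology (f := fun c : Bool => blk c ((k % (N:ℤ)).toNat)))
      (continuous_apply (k / (N:ℤ)))
  set S : Set (X × (ℤ → Bool)) := ⋂ k : ℤ, {p | dist (iterZ f k p.1) (P p.2 k) ≤ ε4}
    with hSdef
  have hScl : IsClosed S := by
    refine isClosed_iInter fun k => isClosed_le ?_ continuous_const
    exact Continuous.dist ((continuous_iterZ f k).comp continuous_fst)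
      ((hPc k).comp continuous_snd)
  have hScomp : IsCompact S := hScl.isCompact
  set K : Set X := Prod.fst '' S with hKdef
  have hKcomp : IsCompact K := hScomp.image continuous_fst
  have memK : ∀ z : X, z ∈ K ↔ ∃ s, ∀ k, dist (iterZ f k z) (P s k) ≤ ε4 := by
    intro z
    constructor
    · rintro ⟨⟨z', s⟩, hzS, rfl⟩
      exact ⟨s, fun k => mem_iInter.1 hzS k⟩
    · rintro ⟨s, hs⟩
      exact ⟨(z, s), mem_iInter.2 hs, rfl⟩
  -- existence of shadowing points
  have hexists : ∀ s : ℤ → Bool, ∃ z, ∀ k, dist (iterZ f k z) (P s k) ≤ ε4 := by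
    intro s
    obtain ⟨z, hz⟩ := Hsh (P s) (hpo s)
    exact ⟨z, fun k => (hz k).le⟩
  -- detection estimates
  set a : X := (⇑f)^[k0] x with hadef
  set b : X := (⇑f)^[k0] y with hbdef
  have hab : dist a b = γ := hk0.symm
  have hPik0 : ∀ (s : ℤ → Bool) (i : ℤ), P s (i * N + k0) = blk (s i) k0 :=
    fun s i => Pval s i k0 (by omega)
  have hblk_t : ∀ c : Bool, c = true → blk c k0 = b := by
    intro c hc; simp only [hblkdef]; rw [if_pos ⟨hc, hk0n⟩]
  have hblk_f : ∀ c : Bool, c = false → blk c k0 = (⇑f)^[k0] z0 := by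
    intro c hc; simp only [hblkdef]; rw [if_neg (by simp [hc])]
  have hz0a : dist ((⇑f)^[k0] z0) a < δ₃ := hc1 k0 (by omega)
  have hdet : ∀ (z : X) (s : ℤ → Bool), (∀ k, dist (iterZ f k z) (P s k) ≤ ε4) →
      ∀ i : ℤ,
      (s i = true → dist (iterZ f (i*N + k0) z) b ≤ ε4 ∧
        γ - ε4 ≤ dist (iterZ f (i*N + k0) z) a) ∧
      (s i = false → dist (iterZ f (i*N + k0) z) a ≤ ε4 + δ₃ ∧
        γ - ε4 - δ₃ ≤ dist (iterZ f (i*N + k0) z) b) := by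
    intro z s hs i
    have h0 := hs (i * N + k0)
    rw [hPik0 s i] at h0
    constructor
    · intro ht
      rw [hblk_t _ ht] at h0
      refine ⟨h0, ?_⟩
      have := dist_triangle a (iterZ f (i*N + k0) z) b
      rw [dist_comm a (iterZ f (i*N+k0) z)] at this
      linarith [hab ▸ this]
    · intro hf
      rw [hblk_f _ hf] at h0
      constructor
      · calc dist (iterZ f (i*N + k0) z) a
            ≤ dist (iterZ f (i*N + k0) z) ((⇑f)^[k0] z0) + dist ((⇑f)^[k0] z0) a :=
              dist_triangle _ _ _
          _ ≤ ε4 + δ₃ := add_le_add h0 hz0a.le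
      · have h1 : dist (iterZ f (i*N + k0) z) a ≤ ε4 + δ₃ := by
          calc dist (iterZ f (i*N + k0) z) a
              ≤ dist (iterZ f (i*N + k0) z) ((⇑f)^[k0] z0) + dist ((⇑f)^[k0] z0) a :=
                dist_triangle _ _ _
            _ ≤ ε4 + δ₃ := add_le_add h0 hz0a.le
        have h2 := dist_triangle a (iterZ f (i*N + k0) z) b
        rw [dist_comm a (iterZ f (i*N+k0) z)] at h2
        linarith [hab ▸ h2]
  -- the coding map
  set hh : X → ℤ → Bool := fun z i =>
    decide (dist (iterZ f (i*N + k0) z) b < dist (iterZ f (i*N + k0) z) a) with hhdef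
  have hval : ∀ (z : X) (s : ℤ → Bool), (∀ k, dist (iterZ f k z) (P s k) ≤ ε4) →
      hh z = s := by
    intro z s hs
    funext i
    have hd := hdet z s hs i
    simp only [hhdef]
    cases hsi : s i with
    | true =>
        obtain ⟨h1, h2⟩ := hd.1 hsi
        exact decide_eq_true (by rw [hε4def] at h1 h2; linarith)
    | false =>
        obtain ⟨h1, h2⟩ := hd.2 hsi
        refine decide_eq_false (not_lt.2 ?_)
        rw [hε4def] at h1 h2; linarith
  -- invariance
  have hfwd : ∀ z ∈ K, (⇑f)^[N] z ∈ K := by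
    intro z hz
    obtain ⟨s, hs⟩ := (memK z).1 hz
    refine (memK _).2 ⟨fun i => s (i+1), fun k => ?_⟩
    have e : iterZ f k ((⇑f)^[N] z) = iterZ f (k + N) z := by
      rw [← iterZ_natCast f N z, ← iterZ_add]
    rw [e, ← hPshift s k]
    exact hs (k + N)
  have hbwd : ∀ z ∈ K, ∃ w ∈ K, (⇑f)^[N] w = z := by
    intro z hz
    obtain ⟨s, hs⟩ := (memK z).1 hz
    refine ⟨iterZ f (-(N:ℤ)) z, (memK _).2 ⟨fun i => s (i-1), fun k => ?_⟩, ?_⟩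
    · have e : iterZ f k (iterZ f (-(N:ℤ)) z) = iterZ f (k - N) z := by
        rw [← iterZ_add, ← sub_eq_add_neg]
      rw [e]
      have e2 : P (fun i => s (i-1)) k = P s (k - N) := by
        have h3 := hPshift (fun i => s (i-1)) (k - N)
        rw [sub_add_cancel] at h3
        rw [h3]
        have e4 : (fun i : ℤ => s (i + 1 - 1)) = s := by
          funext i; norm_num
        rw [e4]
      rw [e2]; exact hs (k - N)
    · have e0 : ((N:ℤ) + -(N:ℤ)) = 0 := by ring
      rw [← iterZ_natCast f N, ← iterZ_add, e0, iterZ_zero]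
  have hKinv : (⇑f)^[N] '' K = K := by
    apply Set.Subset.antisymm
    · rintro u ⟨w, hw, rfl⟩; exact hfwd w hw
    · intro z hz
      obtain ⟨w, hw, he⟩ := hbwd z hz
      exact ⟨w, hw, he⟩
  -- diameter bound
  have hblkd : ∀ (c c' : Bool) (j : ℕ), dist (blk c j) (blk c' j) ≤ γ + δ₃ := by
    have key : ∀ j : ℕ, dist (blk true j) (blk false j) ≤ γ + δ₃ := by
      intro j
      by_cases hj : j < n
      · have e1 : blk true j = (⇑f)^[j] y := by
          simp only [hblkdef]; simp [hj]
        have e2 : blk false j = (⇑f)^[j] z0 := by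
          simp only [hblkdef]; rw [if_neg (by simp)]
        rw [e1, e2]
        calc dist ((⇑f)^[j] y) ((⇑f)^[j] z0)
            ≤ dist ((⇑f)^[j] y) ((⇑f)^[j] x) + dist ((⇑f)^[j] x) ((⇑f)^[j] z0) :=
              dist_triangle _ _ _
          _ ≤ γ + δ₃ := add_le_add (by rw [dist_comm]; exact hub j hj)
              (by rw [dist_comm]; exact (hc1 j (by omega)).le)
      · have e1 : blk true j = (⇑f)^[j] z0 := by
          simp only [hblkdef]; rw [if_neg (by omega)]
        have e2 : blk false j = (⇑f)^[j] z0 := by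
          simp only [hblkdef]; rw [if_neg (by simp)]
        rw [e1, e2, dist_self]
        have := hδ₃pos
        linarith
    intro c c' j
    match c, c' with
    | true, true => rw [dist_self]; linarith [hδ₃pos, hγpos]
    | false, false => rw [dist_self]; linarith [hδ₃pos, hγpos]
    | true, false => exact key j
    | false, true => rw [dist_comm]; exact key j
  have hdiam : ∀ k : ℤ, Metric.diam (iterZ f k '' K) ≤ 2 * γ := by
    intro k
    apply Metric.diam_le_of_forall_dist_le (by linarith)
    rintro u ⟨zu, hzu, rfl⟩ v ⟨zv, hzv, rfl⟩
    obtain ⟨su, hsu⟩ := (memK zu).1 hzu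
    obtain ⟨sv, hsv⟩ := (memK zv).1 hzv
    have h1 := hsu k
    have h2 := hsv k
    rw [dist_comm] at h2
    have h3 : dist (P su k) (P sv k) ≤ γ + δ₃ := by
      simp only [hPdef]; exact hblkd _ _ _
    have h4 := dist_triangle4 (iterZ f k zu) (P su k) (P sv k) (iterZ f k zv)
    rw [hε4def] at h1 h2
    have h5 : δ₃ ≤ ε/8 := hδ₃ε
    linarith
  -- continuity of the coding map on K
  have hcont : ContinuousOn hh K := by
    intro z hz
    rw [continuousWithinAt_pi]
    intro i
    obtain ⟨s, hs⟩ := (memK z).1 hz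
    have hzi : hh z = s := hval z s hs
    have hgc : Continuous fun w => dist (iterZ f (i*N + k0) w) b :=
      (continuous_iterZ f _).dist continuous_const
    have hgc' : Continuous fun w => dist (iterZ f (i*N + k0) w) a :=
      (continuous_iterZ f _).dist continuous_const
    cases hsi : s i with
    | true =>
      have hO : IsOpen {w : X | dist (iterZ f (i*N + k0) w) b < dist (iterZ f (i*N + k0) w) a} :=
        isOpen_lt hgc hgc'
      have hzO : z ∈ {w : X | dist (iterZ f (i*N + k0) w) b < dist (iterZ f (i*N + k0) w) a} := by
        obtain ⟨h1, h2⟩ := (hdet z s hs i).1 hsi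
        rw [hε4def] at h1 h2
        simp only [Set.mem_setOf_eq]
        linarith
      have heq : (fun w => hh w i) =ᶠ[𝓝[K] z] fun _ => true := by
        filter_upwards [mem_nhdsWithin_of_mem_nhds (hO.mem_nhds hzO)] with w hw
        exact decide_eq_true hw
      exact (continuousWithinAt_const).congr_of_eventuallyEq heq (by rw [hzi]; exact hsi)
    | false =>
      have hO : IsOpen {w : X | dist (iterZ f (i*N + k0) w) a < dist (iterZ f (i*N + k0) w) b} :=
        isOpen_lt hgc' hgc
      have hzO : z ∈ {w : X | dist (iterZ f (i*N + k0) w) a < dist (iterZ f (i*N + k0) w) b} := by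
        obtain ⟨h1, h2⟩ := (hdet z s hs i).2 hsi
        rw [hε4def] at h1 h2
        simp only [Set.mem_setOf_eq]
        linarith
      have heq : (fun w => hh w i) =ᶠ[𝓝[K] z] fun _ => false := by
        filter_upwards [mem_nhdsWithin_of_mem_nhds (hO.mem_nhds hzO)] with w hw
        exact decide_eq_false (not_lt.2 hw.le)
      exact (continuousWithinAt_const).congr_of_eventuallyEq heq (by rw [hzi]; exact hsi)
  -- surjectivity
  have hsurj : ∀ s : ℤ → Bool, ∃ p ∈ K, hh p = s := by
    intro s
    obtain ⟨z, hz⟩ := hexists s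
    exact ⟨z, (memK z).2 ⟨s, hz⟩, hval z s hz⟩
  -- equivariance
  have hequi : ∀ p ∈ K, hh ((⇑f)^[N] p) = fun i => hh p (i + 1) := by
    intro p hp
    obtain ⟨s, hs⟩ := (memK p).1 hp
    have h1 : hh p = s := hval p s hs
    have h2 : hh ((⇑f)^[N] p) = fun i => s (i+1) := by
      apply hval
      intro k
      have e : iterZ f k ((⇑f)^[N] p) = iterZ f (k + N) p := by
        rw [← iterZ_natCast f N p, ← iterZ_add]
      rw [e, ← hPshift s k]
      exact hs (k + N)
    rw [h2, h1]
  -- assemble main conclusions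
  refine ⟨N, hN1, K, hKcomp, hKinv, hdiam, ⟨hh, hcont, hsurj, hequi⟩, ?_, ?_⟩
  · -- K is uncountable
    intro hK
    have h1 : (Set.univ : Set (ℤ → Bool)).Countable := by
      have h2 : (Set.univ : Set (ℤ → Bool)) ⊆ hh '' K := by
        intro s _
        obtain ⟨p, hp, hps⟩ := hsurj s
        exact ⟨p, hp, hps⟩
      exact (hK.image hh).mono h2
    rw [Set.countable_univ_iff] at h1
    obtain ⟨g, hg⟩ := exists_surjective_nat (ℤ → Bool)
    classical
    have hG : Function.Surjective (fun u : ℤ → Bool => {i : ℤ | u i = true}) := by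
      intro t
      refine ⟨fun i => if i ∈ t then true else false, ?_⟩
      ext i
      by_cases hi : i ∈ t <;> simp [hi]
    have htn : Function.Surjective (Int.toNat) := fun m => ⟨(m : ℤ), Int.toNat_natCast m⟩
    exact Function.cantor_surjective _ (hG.comp (hg.comp htn))
  · -- entropy bound
    set U : Set (X × X) := {p : X × X | dist p.1 p.2 < ε/8} with hUdef
    have hU : U ∈ uniformity X := Metric.dist_mem_uniformity (by linarith)
    have hsep : ∀ (zw zw' : X) (sw sw' : ℤ → Bool),
        (∀ k, dist (iterZ f k zw) (P sw k) ≤ ε4) →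
        (∀ k, dist (iterZ f k zw') (P sw' k) ≤ ε4) →
        ∀ i : ℤ, sw i ≠ sw' i →
        3*ε/8 ≤ dist (iterZ f (i*N + k0) zw) (iterZ f (i*N + k0) zw') := by
      have main : ∀ (u u' : X) (t t' : ℤ → Bool) (i : ℤ),
          (∀ k, dist (iterZ f k u) (P t k) ≤ ε4) →
          (∀ k, dist (iterZ f k u') (P t' k) ≤ ε4) → t i = true → t' i = false →
          3*ε/8 ≤ dist (iterZ f (i*N + k0) u) (iterZ f (i*N + k0) u') := by
        intro u u' t t' i hu hu' ht ht'
        obtain ⟨h1, _⟩ := (hdet u t hu i).1 ht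
        obtain ⟨h2, _⟩ := (hdet u' t' hu' i).2 ht'
        have h3 := dist_triangle4 b (iterZ f (i*N+k0) u) (iterZ f (i*N+k0) u') a
        rw [dist_comm b (iterZ f (i*N+k0) u)] at h3
        have h4 : dist b a = γ := by rw [dist_comm]; exact hab
        rw [h4] at h3
        rw [hε4def] at h1 h2
        linarith [hδ₃ε, h3]
      intro zw zw' sw sw' hw hw' i hne
      cases hsw : sw i with
      | true =>
        have hsw' : sw' i = false := by
          rw [hsw] at hne
          cases h : sw' i
          · rfl
          · exact absurd h.symm hne
        exact main zw zw' sw sw' i hw hw' hsw hsw'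
      | false =>
        have hsw' : sw' i = true := by
          rw [hsw] at hne
          cases h : sw' i
          · exact absurd h.symm hne
          · rfl
        rw [dist_comm]
        exact main zw' zw sw' sw i hw' hw hsw' hsw
    have hcard : ∀ M : ℕ, ((2^M : ℕ) : ENat) ≤ Dynamics.netMaxcard (⇑f) K U (M*N) := by
      intro M
      classical
      set φ : (Fin M → Bool) → (ℤ → Bool) := fun w k =>
        if hk : 0 ≤ k ∧ k < (M:ℤ) then w ⟨k.toNat, by omega⟩ else false with hφdef
      have hφval : ∀ (w : Fin M → Bool) (i : Fin M), φ w (i : ℤ) = w i := by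
        intro w i
        have h1 : (0:ℤ) ≤ ((i:ℕ):ℤ) ∧ ((i:ℕ):ℤ) < M := ⟨Int.natCast_nonneg _, by exact_mod_cast i.2⟩
        simp only [hφdef]
        rw [dif_pos h1]
        congr
      choose ζ hζsh using fun w : Fin M → Bool => hexists (φ w)
      have hζK : ∀ w, ζ w ∈ K := fun w => (memK _).2 ⟨φ w, hζsh w⟩
      have hζsep : ∀ w w' : Fin M → Bool, w ≠ w' → ∃ i : Fin M,
          3*ε/8 ≤ dist (iterZ f (((i:ℕ):ℤ)*N + k0) (ζ w)) (iterZ f (((i:ℕ):ℤ)*N + k0) (ζ w')) := by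
        intro w w' hww
        obtain ⟨i, hi⟩ : ∃ i, w i ≠ w' i := by
          by_contra hc
          push_neg at hc
          exact hww (funext hc)
        refine ⟨i, hsep _ _ _ _ (hζsh w) (hζsh w') ((i:ℕ):ℤ) ?_⟩
        rw [hφval w i, hφval w' i]
        exact hi
      have hζinj : Function.Injective ζ := by
        intro w w' he
        by_contra hww
        obtain ⟨i, hi⟩ := hζsep w w' hww
        rw [he, dist_self] at hi
        linarith
      set t : Finset X := Finset.univ.image ζ with htdef
      have htcard : t.card = 2^M := by
        rw [htdef, Finset.card_image_of_injective _ hζinj, Finset.card_univ]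
        simp
      have hnet : Dynamics.IsDynNetIn (⇑f) K U (M*N) (↑t) := by
        constructor
        · intro u hu
          simp only [htdef, Finset.coe_image, Finset.coe_univ, Set.image_univ] at hu
          obtain ⟨w, rfl⟩ := hu
          exact hζK w
        · intro u hu v hv huv
          simp only [htdef, Finset.coe_image, Finset.coe_univ, Set.image_univ] at hu hv
          obtain ⟨w, rfl⟩ := hu
          obtain ⟨w', rfl⟩ := hv
          have hww : w ≠ w' := fun h => huv (by rw [h])
          obtain ⟨i, hi⟩ := hζsep w w' hww
          have e : ∀ (zz : X), iterZ f (((i:ℕ):ℤ)*N + k0) zz = (⇑f)^[(i:ℕ)*N + k0] zz := by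
            intro zz
            have h0 : (((i:ℕ):ℤ)*N + k0) = (((i:ℕ)*N + k0 : ℕ) : ℤ) := by push_cast; ring
            rw [h0, iterZ_natCast]
          rw [e, e] at hi
          refine Set.disjoint_left.2 fun g hg hg' => ?_
          have h1 : ((ζ w), g) ∈ Dynamics.dynEntourage (⇑f) U (M*N) := hg
          have h2 : ((ζ w'), g) ∈ Dynamics.dynEntourage (⇑f) U (M*N) := hg'
          rw [Dynamics.mem_dynEntourage] at h1 h2
          have hj : (i:ℕ)*N + k0 < M*N := by
            have hi2 : (i:ℕ) < M := i.2
            calc (i:ℕ)*N + k0 < (i:ℕ)*N + N := by omega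
              _ = ((i:ℕ)+1)*N := by ring
              _ ≤ M*N := Nat.mul_le_mul_right _ (by omega)
          have h3 := h1 _ hj
          have h4 := h2 _ hj
          simp only [hUdef, Set.mem_setOf_eq] at h3 h4
          have h5 := dist_triangle ((⇑f)^[(i:ℕ)*N+k0] (ζ w)) ((⇑f)^[(i:ℕ)*N+k0] g)
            ((⇑f)^[(i:ℕ)*N+k0] (ζ w'))
          rw [dist_comm ((⇑f)^[(i:ℕ)*N+k0] g)] at h5
          linarith
      have hle := hnet.card_le_netMaxcard
      rw [htcard] at hle
      exact hle
    have hNE : ((Real.log 2 / N : ℝ) : EReal) ≤ Dynamics.netEntropyEntourage (⇑f) K U := by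
      unfold Dynamics.netEntropyEntourage
      apply Filter.le_limsup_of_frequently_le ?_ ?_
      · rw [Filter.frequently_atTop]
        intro m0
        set M : ℕ := m0 + 1 with hMdef
        refine ⟨M * N, ?_, ?_⟩
        · calc m0 ≤ m0 + 1 := by omega
            _ = M := rfl
            _ ≤ M * N := Nat.le_mul_of_pos_right _ (by omega)
        · have hc := hcard M
          have hlog : ENNReal.log (((2^M : ℕ) : ENat) : ENNReal) ≤
              ENNReal.log ((Dynamics.netMaxcard (⇑f) K U (M*N) : ENat) : ENNReal) :=
            ENNReal.log_monotone (ENat.toENNReal_mono hc)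
          have hlogval : ENNReal.log (((2^M : ℕ) : ENat) : ENNReal) = (M : EReal) * ((Real.log 2 : ℝ) : EReal) := by
            have e1 : (((2^M : ℕ) : ENat) : ENNReal) = (2 : ENNReal)^M := by
              push_cast
              norm_num
            rw [e1, ENNReal.log_pow]
            congr 1
            have e2 : (2 : ENNReal) = ENNReal.ofReal 2 := by norm_num
            rw [e2, ENNReal.log_ofReal_of_pos (by norm_num)]
          have hdiv := EReal.monotone_div_right_of_nonneg
            (Nat.cast_nonneg' (M * N) : (0:EReal) ≤ ((M*N : ℕ) : EReal)) hlog
          rw [hlogval] at hdiv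
          dsimp only at hdiv
          refine le_trans (le_of_eq ?_) hdiv
          have e3 : ((M : ℕ) : EReal) = (((M:ℕ):ℝ) : EReal) := rfl
          have e4 : (((M*N : ℕ)) : EReal) = (((M*N : ℕ):ℝ) : EReal) := rfl
          rw [e3, e4, ← EReal.coe_mul, ← EReal.coe_div]
          congr 1
          have hM0 : ((M:ℕ):ℝ) ≠ 0 := by positivity
          have hN0 : ((N:ℕ):ℝ) ≠ 0 := by positivity
          field_simp
          push_cast
          ring
      · exact Filter.isBoundedUnder_of ⟨⊤, fun _ => le_top⟩
    calc ((Real.log 2 / N : ℝ) : EReal)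
        ≤ Dynamics.netEntropyEntourage (⇑f) K U := hNE
      _ ≤ Dynamics.coverEntropy (⇑f) K :=
        Dynamics.netEntropyEntourage_le_coverEntropy (⇑f) K hU
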